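/- For every γ with 0 < γ < ∞, the series ∑_{i=0}^{∞} (γ^i/i!) e^{−γ} log₂(i!) converges, and the lower bound c_c^{(L)}(γ) = ∑_{i=0}^{∞} (γ^i/i!) e^{−γ} log₂(i!) − γ log₂(γ/e) is a well-defined nonnegative real number. -/

import Mathlib

open Real

lemma tsum_exp_series (γ : ℝ) : ∑' n : ℕ, γ ^ n / (Nat.factorial n) = Real.exp γ := by
  rw [Real.exp_eq_exp_ℝ, NormedSpace.exp_eq_tsum_div]

lemma summable_mul_exp_series (γ : ℝ) :
    Summable (fun i : ℕ => (i : ℝ) * γ ^ i / (Nat.factorial i)) := by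
  have h := (Real.summable_pow_div_factorial γ).mul_left γ
  have h' : Summable (fun j : ℕ => ((j : ℕ) + 1 : ℝ) * γ ^ (j + 1) / (Nat.factorial (j + 1))) := by
    refine h.congr fun j => ?_
    rw [Nat.factorial_succ, pow_succ]
    push_cast
    field_simp
  refine (summable_nat_add_iff (f := fun i : ℕ => (i : ℝ) * γ ^ i / (Nat.factorial i)) 1).mp ?_
  exact h'.congr fun j => by push_cast; ring_nf

lemma tsum_mul_exp_series (γ : ℝ) :
    ∑' i : ℕ, (i : ℝ) * γ ^ i / (Nat.factorial i) = γ * Real.exp γ := by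
  rw [Summable.tsum_eq_zero_add (summable_mul_exp_series γ)]
  simp only [Nat.cast_zero, zero_mul, pow_zero, Nat.factorial_zero, Nat.cast_one, zero_div,
    zero_add]
  have : ∀ j : ℕ, ((j : ℕ) + 1 : ℝ) * γ ^ (j + 1) / (Nat.factorial (j + 1))
      = γ * (γ ^ j / (Nat.factorial j)) := by
    intro j
    rw [Nat.factorial_succ, pow_succ]
    push_cast
    field_simp
  calc ∑' j : ℕ, ((j + 1 : ℕ) : ℝ) * γ ^ (j + 1) / (Nat.factorial (j + 1))
      = ∑' j : ℕ, γ * (γ ^ j / (Nat.factorial j)) := by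
        refine tsum_congr fun j => ?_; push_cast; exact this j
    _ = γ * Real.exp γ := by rw [tsum_mul_left, tsum_exp_series]

lemma logb_factorial_le_sq (i : ℕ) : Real.logb 2 (Nat.factorial i) ≤ (i : ℝ) ^ 2 := by
  have hfac : (Nat.factorial i : ℝ) ≤ (2 : ℝ) ^ ((i : ℝ) ^ 2) := by
    have h1 : Nat.factorial i ≤ i ^ i := Nat.factorial_le_pow i
    have h2 : i ^ i ≤ (2 ^ i) ^ i :=
      Nat.pow_le_pow_left (Nat.lt_two_pow_self).le i
    have : (Nat.factorial i : ℝ) ≤ ((2 : ℝ) ^ i) ^ i := by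
      exact_mod_cast h1.trans h2
    calc (Nat.factorial i : ℝ) ≤ ((2:ℝ) ^ i) ^ i := this
      _ = (2:ℝ) ^ ((i : ℝ) ^ 2) := by
          rw [← Real.rpow_natCast (2:ℝ) i, ← Real.rpow_natCast _ i, ← Real.rpow_mul (by norm_num)]
          norm_num [sq]
  calc Real.logb 2 (Nat.factorial i) ≤ Real.logb 2 ((2:ℝ) ^ ((i:ℝ)^2)) := by
        apply Real.logb_le_logb_of_le one_lt_two (by exact_mod_cast Nat.factorial_pos i) hfac
    _ = (i : ℝ) ^ 2 := by rw [Real.logb_rpow (by norm_num) (by norm_num)]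

lemma logb_factorial_nonneg (i : ℕ) : 0 ≤ Real.logb 2 (Nat.factorial i) :=
  Real.logb_nonneg one_lt_two (by exact_mod_cast Nat.one_le_iff_ne_zero.mpr (Nat.factorial_ne_zero i))

lemma summable_sq_exp_series (γ : ℝ) (hγ : 0 < γ) :
    Summable (fun i : ℕ => γ ^ i / (Nat.factorial i) * (i : ℝ) ^ 2) := by
  have h : Summable (fun i : ℕ => 2 * ((2 * γ) ^ i / (Nat.factorial i))) :=
    (Real.summable_pow_div_factorial (2 * γ)).mul_left 2
  refine Summable.of_nonneg_of_le (fun i => ?_) (fun i => ?_) h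
  · positivity
  · have hi2 : ((i : ℝ) ^ 2) ≤ 2 * 2 ^ i := by
      have : i ^ 2 ≤ 2 * 2 ^ i := by
        induction i with
        | zero => norm_num
        | succ n ih =>
          rcases Nat.lt_or_ge n 3 with h | h
          · interval_cases n <;> norm_num
          · have : (n + 1) ^ 2 ≤ 2 * n ^ 2 := by nlinarith
            calc (n+1)^2 ≤ 2 * n ^ 2 := this
              _ ≤ 2 * (2 * 2 ^ n) := by omega
              _ = 2 * 2 ^ (n+1) := by ring
      exact_mod_cast this
    calc γ ^ i / (Nat.factorial i) * (i : ℝ) ^ 2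
        ≤ γ ^ i / (Nat.factorial i) * (2 * 2 ^ i) := by
          apply mul_le_mul_of_nonneg_left hi2; positivity
      _ = 2 * ((2 * γ) ^ i / (Nat.factorial i)) := by rw [mul_pow]; ring

theorem coordinated_lower_bound_welldefined (γ : ℝ) (hγ : 0 < γ) :
    Summable (fun i : ℕ =>
        γ ^ i / (Nat.factorial i) * Real.exp (-γ) * Real.logb 2 (Nat.factorial i))
    ∧ 0 ≤ (∑' i : ℕ,
          γ ^ i / (Nat.factorial i) * Real.exp (-γ) * Real.logb 2 (Nat.factorial i))
        - γ * Real.logb 2 (γ / Real.exp 1) := by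
  have hsum : Summable (fun i : ℕ =>
      γ ^ i / (Nat.factorial i) * Real.exp (-γ) * Real.logb 2 (Nat.factorial i)) := by
    have h := ((summable_sq_exp_series γ hγ).mul_left (Real.exp (-γ)))
    refine Summable.of_nonneg_of_le (fun i => ?_) (fun i => ?_) h
    · have := logb_factorial_nonneg i; positivity
    · have h1 := logb_factorial_le_sq i
      have hpos : 0 ≤ γ ^ i / (Nat.factorial i) * Real.exp (-γ) := by positivity
      calc γ ^ i / (Nat.factorial i) * Real.exp (-γ) * Real.logb 2 (Nat.factorial i)
          ≤ γ ^ i / (Nat.factorial i) * Real.exp (-γ) * ((i:ℝ)^2) := by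
            exact mul_le_mul_of_nonneg_left h1 hpos
        _ = Real.exp (-γ) * (γ ^ i / (Nat.factorial i) * (i:ℝ)^2) := by ring
  refine ⟨hsum, ?_⟩
  -- lower bound: logb 2 (i!) ≥ (i * log γ - γ) / log 2
  have hlog2 : (0 : ℝ) < Real.log 2 := Real.log_pos one_lt_two
  have key : ∀ i : ℕ, ((i : ℝ) * Real.log γ - γ) / Real.log 2
      ≤ Real.logb 2 (Nat.factorial i) := by
    intro i
    rw [Real.logb, div_le_div_iff_of_pos_right hlog2]
    have hfac : γ ^ i ≤ (Nat.factorial i : ℝ) * Real.exp γ := by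
      have h1 : γ ^ i / (Nat.factorial i) ≤ Real.exp γ := by
        have := Real.sum_le_exp_of_nonneg hγ.le (i + 1)
        have h2 : γ ^ i / (Nat.factorial i) ≤ ∑ j ∈ Finset.range (i+1), γ ^ j / (Nat.factorial j) :=
          Finset.single_le_sum (f := fun j => γ ^ j / (Nat.factorial j))
            (fun j _ => by positivity) (Finset.self_mem_range_succ i)
        linarith
      have hf : (0:ℝ) < (Nat.factorial i : ℝ) := by exact_mod_cast (Nat.factorial_pos i)
      calc γ ^ i = γ ^ i / (Nat.factorial i) * (Nat.factorial i) := by field_simp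
        _ ≤ Real.exp γ * (Nat.factorial i) := by
            exact mul_le_mul_of_nonneg_right h1 hf.le
        _ = (Nat.factorial i : ℝ) * Real.exp γ := by ring
    have := Real.log_le_log (by positivity) hfac
    rw [Real.log_mul (by exact_mod_cast (Nat.factorial_pos i).ne') (Real.exp_ne_zero γ),
      Real.log_exp, Real.log_pow] at this
    linarith
  -- define lower series
  set g : ℕ → ℝ := fun i => γ ^ i / (Nat.factorial i) * Real.exp (-γ)
    * (((i : ℝ) * Real.log γ - γ) / Real.log 2) with hg
  have hgsum : Summable g := by
    have h1 : Summable (fun i : ℕ => (i : ℝ) * γ ^ i / (Nat.factorial i)) :=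
      summable_mul_exp_series γ
    have h2 : Summable (fun i : ℕ => γ ^ i / (Nat.factorial i)) :=
      Real.summable_pow_div_factorial γ
    have := ((h1.mul_left (Real.exp (-γ) * Real.log γ / Real.log 2)).sub
      (h2.mul_left (Real.exp (-γ) * γ / Real.log 2)))
    refine this.congr fun i => ?_
    simp only [hg]
    field_simp
  have hgt : ∑' i, g i = γ * Real.logb 2 (γ / Real.exp 1) := by
    have h1 : Summable (fun i : ℕ => (i : ℝ) * γ ^ i / (Nat.factorial i)) :=
      summable_mul_exp_series γ
    have h2 : Summable (fun i : ℕ => γ ^ i / (Nat.factorial i)) :=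
      Real.summable_pow_div_factorial γ
    have heq : ∀ i : ℕ, g i = (Real.exp (-γ) * Real.log γ / Real.log 2)
        * ((i : ℝ) * γ ^ i / (Nat.factorial i))
        - (Real.exp (-γ) * γ / Real.log 2) * (γ ^ i / (Nat.factorial i)) := by
      intro i; simp only [hg]; field_simp
    rw [tsum_congr heq,
      Summable.tsum_sub ((h1.mul_left _)) ((h2.mul_left _)),
      tsum_mul_left, tsum_mul_left, tsum_mul_exp_series, tsum_exp_series]
    rw [Real.logb, Real.log_div hγ.ne' (Real.exp_ne_zero 1), Real.log_exp]
    rw [Real.exp_neg]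
    field_simp
  have hle : ∑' i, g i ≤ ∑' i : ℕ,
      γ ^ i / (Nat.factorial i) * Real.exp (-γ) * Real.logb 2 (Nat.factorial i) := by
    refine Summable.tsum_le_tsum (fun i => ?_) hgsum hsum
    have hpos : 0 ≤ γ ^ i / (Nat.factorial i) * Real.exp (-γ) := by positivity
    exact mul_le_mul_of_nonneg_left (key i) hpos
  linarith [hgt ▸ hle]
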